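/- Two real-rooted polynomials f and g (with positive leading coefficients) are compatible (i.e., f (1,1)-interlaces g) if and only if there exists a real-rooted polynomial h with positive leading coefficient such that h interlaces f and h interlaces g (i.e., h (1,0)-interlaces both f and g). -/

import Mathlib

open Polynomial in
/-- The `i`-th element (1-indexed) of a list, as an `EReal`, with the convention
that it is `+∞` for `i < 1` and `-∞` past the end of the list. -/
noncomputable def seqOf (L : List ℝ) (i : ℤ) : EReal :=
  if i < 1 then ⊤ else (L[(i - 1).toNat]?).elim ⊥ (fun x => (x : EReal))

open Polynomial in
/-- `rSeq f i` is the `i`-th root of `f`, roots listed in non-increasing order,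
with `r_i = +∞` for `i < 1` and `r_i = -∞` for `i` beyond the number of roots. -/
noncomputable def rSeq (f : Polynomial ℝ) (i : ℤ) : EReal :=
  seqOf (f.roots.sort (· ≥ ·)) i

open Polynomial in
/-- `f` `(p,q)`-interlaces `g` : `r_{i+p}(g) ≤ r_i(f) ≤ r_{i-q}(g)` for all `i`. -/
def PQInt (p q : ℕ) (f g : Polynomial ℝ) : Prop :=
  ∀ i : ℤ, rSeq g (i + p) ≤ rSeq f i ∧ rSeq f i ≤ rSeq g (i - q)

open Polynomial in
/-- `f` is real-rooted with positive leading coefficient. -/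
def RR (f : Polynomial ℝ) : Prop :=
  0 < f.leadingCoeff ∧ f.roots.card = f.natDegree

open Polynomial in
/-- number of roots of `f` (with multiplicity) in `[r, ∞)`. -/
noncomputable def nRoots (f : Polynomial ℝ) (r : ℝ) : ℕ :=
  (f.roots.filter (fun x => r ≤ x)).card

/-- `i`-th largest eigenvalue of a Hermitian matrix, as an `EReal`,
with conventions `λ_i = +∞` for `i < 1` and `λ_i = -∞` for `i > n`. -/
noncomputable def eigSeq {m : Type*} [Fintype m] [DecidableEq m]
    {M : Matrix m m ℂ} (hM : M.IsHermitian) (i : ℤ) : EReal :=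
  seqOf ((Finset.univ.val.map hM.eigenvalues).sort (· ≥ ·)) i

/-- positive index of inertia: number of positive eigenvalues. -/
noncomputable def posIdx {m : Type*} [Fintype m] [DecidableEq m]
    {M : Matrix m m ℂ} (hM : M.IsHermitian) : ℕ :=
  (Finset.univ.filter (fun i => 0 < hM.eigenvalues i)).card

/-- negative index of inertia: number of negative eigenvalues. -/
noncomputable def negIdx {m : Type*} [Fintype m] [DecidableEq m]
    {M : Matrix m m ℂ} (hM : M.IsHermitian) : ℕ :=
  (Finset.univ.filter (fun i => hM.eigenvalues i < 0)).card

/-- characteristic polynomial of `M` equals the real polynomial `f` (coerced to `ℂ`). -/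
def HasCharpoly {m : Type*} [Fintype m] [DecidableEq m]
    (M : Matrix m m ℂ) (f : Polynomial ℝ) : Prop :=
  M.charpoly = f.map (algebraMap ℝ ℂ)

/-! ### Auxiliary lemmas -/

lemma seqOf_of_neg {L : List ℝ} {i : ℤ} (h : i < 1) : seqOf L i = ⊤ := if_pos h

lemma seqOf_of_pos {L : List ℝ} {i : ℤ} (h : 1 ≤ i) :
    seqOf L i = (L[(i - 1).toNat]?).elim ⊥ (fun x => (x : EReal)) :=
  if_neg (not_lt.2 h)

lemma getD_eq_get' {L : List ℝ} {i : ℕ} (h : i < L.length) : L.getD i 0 = L.get ⟨i, h⟩ := by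
  simp [List.getD_eq_getElem?_getD, List.getElem?_eq_getElem h]

lemma get?_eq_getD' {L : List ℝ} {i : ℕ} (h : i < L.length) : L[i]? = some (L.getD i 0) := by
  simp [List.getElem?_eq_getElem h, getD_eq_get' h]

lemma sorted_getD {L : List ℝ} (hL : L.Pairwise (· ≥ ·)) {i j : ℕ} (hij : i ≤ j)
    (hj : j < L.length) : L.getD j 0 ≤ L.getD i 0 := by
  rw [getD_eq_get' hj, getD_eq_get' (lt_of_le_of_lt hij hj)]
  exact hL.rel_get_of_le (Fin.mk_le_mk.2 hij)

lemma seqOf_anti {L : List ℝ} (hL : L.Pairwise (· ≥ ·)) {i j : ℤ} (hij : i ≤ j) :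
    seqOf L j ≤ seqOf L i := by
  rcases lt_or_ge i 1 with hi | hi
  · rw [seqOf_of_neg hi]; exact le_top
  rw [seqOf_of_pos hi, seqOf_of_pos (hi.trans hij)]
  rcases lt_or_ge ((j - 1).toNat) L.length with hj | hj
  · rw [get?_eq_getD' hj,
      get?_eq_getD' (show (i - 1).toNat < L.length from lt_of_le_of_lt (by omega) hj)]
    simp only [Option.elim]
    exact EReal.coe_le_coe_iff.2 (sorted_getD hL (by omega) hj)
  · rw [List.getElem?_eq_none hj]; exact bot_le

/-- The list of pointwise maxima `max (A (i+1)) (B (i+1))`, used as the roots of the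
common interlacer. -/
noncomputable def mergeT (A B : List ℝ) : List ℝ :=
  List.ofFn (n := A.length - 1) fun k =>
    if (k : ℕ) + 1 < B.length then max (A.getD ((k : ℕ) + 1) 0) (B.getD ((k : ℕ) + 1) 0)
    else A.getD ((k : ℕ) + 1) 0

lemma mergeT_get? (A B : List ℝ) (k : ℕ) :
    (mergeT A B)[k]? = if k < A.length - 1 then
      some (if k + 1 < B.length then max (A.getD (k + 1) 0) (B.getD (k + 1) 0)
        else A.getD (k + 1) 0)
    else none := by
  rw [mergeT, List.getElem?_ofFn]
  split <;> simp_all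

lemma mergeT_sorted {A B : List ℝ} (hA : A.Pairwise (· ≥ ·)) (hB : B.Pairwise (· ≥ ·)) :
    (mergeT A B).Pairwise (· ≥ ·) := by
  rw [mergeT, List.pairwise_ofFn]
  intro k l hkl
  have hl := l.isLt
  have hkl' : (k : ℕ) ≤ (l : ℕ) := le_of_lt hkl
  split_ifs with h1 h2 h3
  · exact max_le_max (sorted_getD hA (by omega) (by omega)) (sorted_getD hB (by omega) h2)
  · exact le_max_of_le_left (sorted_getD hA (by omega) (by omega))
  · omega
  · exact sorted_getD hA (by omega) (by omega)

lemma mergeT_seq {A B : List ℝ} (hba : B.length ≤ A.length) {i : ℤ} (hi : 1 ≤ i) :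
    seqOf (mergeT A B) i = max (seqOf A (i + 1)) (seqOf B (i + 1)) := by
  have h2 : (1 : ℤ) ≤ i + 1 := by omega
  rw [seqOf_of_pos hi, seqOf_of_pos h2, seqOf_of_pos h2]
  have hk1 : (i + 1 - 1).toNat = (i - 1).toNat + 1 := by omega
  rw [hk1]
  set k := (i - 1).toNat with hk
  rw [mergeT_get? A B k]
  rcases lt_or_ge k (A.length - 1) with hka | hka
  · rw [if_pos hka, get?_eq_getD' (show k + 1 < A.length by omega)]
    rcases lt_or_ge (k + 1) B.length with hkb | hkb
    · rw [if_pos hkb, get?_eq_getD' hkb]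
      simp only [Option.elim]
      exact EReal.coe_strictMono.monotone.map_max
    · rw [if_neg (not_lt.2 hkb), List.getElem?_eq_none hkb]
      simp only [Option.elim]
      exact (max_eq_left bot_le).symm
  · rw [if_neg (not_lt.2 hka), List.getElem?_eq_none (show A.length ≤ k + 1 by omega),
      List.getElem?_eq_none (show B.length ≤ k + 1 by omega)]
    simp

open Polynomial in
lemma exists_poly (T : List ℝ) (hT : T.Pairwise (· ≥ ·)) :
    ∃ h : Polynomial ℝ, RR h ∧ h.roots.sort (· ≥ ·) = T := by
  refine ⟨(Multiset.map (fun t => X - C t) (↑T : Multiset ℝ)).prod, ⟨?_, ?_⟩, ?_⟩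
  · have hm : (Multiset.map (fun t => X - C t) (↑T : Multiset ℝ)).prod.Monic :=
      monic_multiset_prod_of_monic _ _ (fun t _ => monic_X_sub_C t)
    rw [hm.leadingCoeff]
    exact one_pos
  · rw [roots_multiset_prod_X_sub_C, natDegree_multiset_prod_X_sub_C_eq_card]
  · rw [roots_multiset_prod_X_sub_C]
    exact List.Perm.eq_of_pairwise' (Multiset.pairwise_sort _ _) hT
      (Multiset.coe_eq_coe.1 (Multiset.sort_eq _ _))

open Polynomial in
lemma PQInt_symm {f g : Polynomial ℝ} (H : PQInt 1 1 f g) : PQInt 1 1 g f := by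
  intro i
  have h1 := (H (i + 1)).2
  have h2 := (H (i - 1)).1
  push_cast at h1 h2 ⊢
  constructor
  · simpa using h1
  · simpa using h2

open Polynomial in
lemma buildH {f g : Polynomial ℝ} (hf : RR f) (hg : RR g)
    (hd : g.natDegree ≤ f.natDegree) (H : PQInt 1 1 f g) :
    ∃ h : Polynomial ℝ, RR h ∧ PQInt 1 0 h f ∧ PQInt 1 0 h g := by
  have hAs : (f.roots.sort (· ≥ ·)).Pairwise (· ≥ ·) := Multiset.pairwise_sort _ _
  have hBs : (g.roots.sort (· ≥ ·)).Pairwise (· ≥ ·) := Multiset.pairwise_sort _ _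
  have hba : (g.roots.sort (· ≥ ·)).length ≤ (f.roots.sort (· ≥ ·)).length := by
    rw [Multiset.length_sort, Multiset.length_sort, hf.2, hg.2]; exact hd
  obtain ⟨h, hRR, hsort⟩ := exists_poly (mergeT (f.roots.sort (· ≥ ·)) (g.roots.sort (· ≥ ·)))
    (mergeT_sorted hAs hBs)
  have key : ∀ i : ℤ, 1 ≤ i → rSeq h i = max (rSeq f (i + 1)) (rSeq g (i + 1)) := by
    intro i hi
    rw [rSeq, hsort]
    exact mergeT_seq hba hi
  have hf1 : ∀ i : ℤ, rSeq g (i + 1) ≤ rSeq f i := fun i => by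
    have := (H i).1; push_cast at this; exact this
  have hf2 : ∀ i : ℤ, rSeq f (i + 1) ≤ rSeq g i := fun i => by
    have := (H (i + 1)).2; push_cast at this; simpa using this
  refine ⟨h, hRR, fun i => ?_, fun i => ?_⟩ <;>
    simp only [Nat.cast_one, Nat.cast_zero, sub_zero] <;>
    rcases lt_or_ge i 1 with hi | hi
  · constructor
    · rw [show rSeq h i = ⊤ from seqOf_of_neg hi]
      exact le_top
    · rw [show rSeq h i = ⊤ from seqOf_of_neg hi,
        show rSeq f i = ⊤ from seqOf_of_neg hi]
  · rw [key i hi]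
    exact ⟨le_max_left _ _, max_le (seqOf_anti hAs (by omega)) (hf1 i)⟩
  · constructor
    · rw [show rSeq h i = ⊤ from seqOf_of_neg hi]
      exact le_top
    · rw [show rSeq h i = ⊤ from seqOf_of_neg hi,
        show rSeq g i = ⊤ from seqOf_of_neg hi]
  · rw [key i hi]
    exact ⟨le_max_right _ _, max_le (hf2 i) (seqOf_anti hBs (by omega))⟩

theorem stmt5 (f g : Polynomial ℝ) (hf : RR f) (hg : RR g) :
    PQInt 1 1 f g ↔ ∃ h : Polynomial ℝ, RR h ∧ PQInt 1 0 h f ∧ PQInt 1 0 h g := by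
  constructor
  · intro H
    rcases le_total g.natDegree f.natDegree with hd | hd
    · exact buildH hf hg hd H
    · obtain ⟨h, hh, h1, h2⟩ := buildH hg hf hd (PQInt_symm H)
      exact ⟨h, hh, h2, h1⟩
  · rintro ⟨h, hh, h1, h2⟩ i
    have a1 : ∀ j : ℤ, rSeq f (j + 1) ≤ rSeq h j := fun j => by
      have := (h1 j).1; push_cast at this; exact this
    have a2 : ∀ j : ℤ, rSeq h j ≤ rSeq f j := fun j => by
      have := (h1 j).2; push_cast at this; simpa using this
    have b1 : ∀ j : ℤ, rSeq g (j + 1) ≤ rSeq h j := fun j => by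
      have := (h2 j).1; push_cast at this; exact this
    have b2 : ∀ j : ℤ, rSeq h j ≤ rSeq g j := fun j => by
      have := (h2 j).2; push_cast at this; simpa using this
    constructor
    · push_cast
      exact (b1 i).trans (a2 i)
    · push_cast
      have := a1 (i - 1)
      rw [sub_add_cancel] at this
      exact this.trans (b2 (i - 1))
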